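/- Define on lists of pieces (pairs (a,b) of digit and positive count) the maps C sending a^b to the two pieces b^1 a^1, L sending a^b to b^2 a^2, and η sending a^b to κ(a)^{2b}, where κ(a) = 2a (interpreted as the two-digit block, i.e., the piece list [2^1, a^1] flattened appropriately) for a ∈ {1,2,3} and κ(a) = 1 otherwise. Then for any single piece a^b with a ∈ {1,2,3} and b ∈ {1,2,3}, (L ∘ η)(a^b) = (η ∘ C)(a^b) as digit strings. -/
import Mathlib


/-- Run-length encoding of a digit string (a list of digits). -/
def rle : List ℕ → List (ℕ × ℕ)
  | [] => []
  | a :: t =>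
    match rle t with
    | [] => [(a, 1)]
    | (b, n) :: r => if a = b then (a, n + 1) :: r else (a, 1) :: (b, n) :: r

/-- `P` is a run-length representation of the digit string `S`:
multiplicities are positive, adjacent base digits are distinct, and `S` is
the concatenation of the runs. -/
def IsRLE (S : List ℕ) (P : List (ℕ × ℕ)) : Prop :=
  (∀ p ∈ P, 1 ≤ p.2) ∧ List.Chain' (fun p q => p.1 ≠ q.1) P ∧
    S = (P.map fun p => List.replicate p.2 p.1).flatten

/-- The look-and-say-again step: each run `a^n` is read off as `n n a a`. -/
def lsa (T : List ℕ) : List ℕ := (rle T).flatMap fun p => [p.2, p.2, p.1, p.1]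

/-- Property `P`: every run has base digit in `{1,2,4,6}` and length in `{2,4,6}`. -/
def propP (T : List ℕ) : Prop :=
  ∀ p ∈ rle T, p.1 ∈ ({1, 2, 4, 6} : Set ℕ) ∧ p.2 ∈ ({2, 4, 6} : Set ℕ)

/-- `κ(a) = 2a` for `a ∈ {1,2,3}` and `1` otherwise. -/
def kap (a : ℕ) : ℕ := if a = 1 ∨ a = 2 ∨ a = 3 then 2 * a else 1

/-- `η` on a single piece `a^b`: the digit `κ(a)` repeated `2b` times. -/
def etaPiece (p : ℕ × ℕ) : List ℕ := List.replicate (2 * p.2) (kap p.1)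

/-- `η` on a list of pieces, by concatenation. -/
def etaList (P : List (ℕ × ℕ)) : List ℕ := (P.map etaPiece).flatten

/-- The look-and-say-again operation `L` on a single piece `a^b`, as a string. -/
def lsaPiece (p : ℕ × ℕ) : List ℕ := [p.2, p.2, p.1, p.1]

/-- The classical look-and-say operation `C` on a single piece `a^b`, as a string. -/
def csPiece (p : ℕ × ℕ) : List ℕ := [p.2, p.1]

/-- `L ∘ η = η ∘ C` on a single piece `a^b` with `a, b ∈ {1,2,3}`:
`L` applied to the `η`-image piece `κ(a)^{2b}` yields the same digit string as
`η` applied to the pieces of the string `C(a^b)`. -/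
theorem L_eta_eq_eta_C (a b : ℕ) (ha : a ∈ ({1, 2, 3} : Set ℕ))
    (hb : b ∈ ({1, 2, 3} : Set ℕ)) :
    lsaPiece (kap a, 2 * b) = etaList (rle (csPiece (a, b))) := by
  rcases ha with rfl|rfl|rfl <;> rcases hb with rfl|rfl|rfl <;> rfl
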